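/- Define h(1) = 1 and h(β) = 3β + (2β+1)·h(β−1) for β ≥ 2. If D is a finite multipartite digraph containing no cyclic triangle with transversal independence number β(D) = β ≥ 1, then k(D) ≤ h(β). -/

import Mathlib

/-- `hFun 1 = 1` and `hFun β = 3β + (2β+1)·hFun (β-1)` for `β ≥ 2`. -/
def hFun : ℕ → ℕ
  | 0 => 0
  | 1 => 1
  | (n + 2) => 3 * (n + 2) + (2 * (n + 2) + 1) * hFun (n + 1)

lemma hFun_le_succ (n : ℕ) : hFun n ≤ hFun (n + 1) := by
  match n with
  | 0 => simp [hFun]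
  | m + 1 =>
    have h : hFun (m + 2) = 3 * (m + 2) + (2 * (m + 2) + 1) * hFun (m + 1) := rfl
    nlinarith [Nat.zero_le (hFun (m + 1))]

lemma bound_step (n : ℕ) :
    (n + 1) + ((n + 1) * hFun n + hFun n) ≤ hFun (n + 1) := by
  match n with
  | 0 => simp [hFun]
  | m + 1 =>
    have h : hFun (m + 2) = 3 * (m + 2) + (2 * (m + 2) + 1) * hFun (m + 1) := rfl
    nlinarith [Nat.zero_le (hFun (m + 1))]

lemma aux_domination {V ι : Type} (arc : V → V → Prop) (part : V → ι)
    (hirr : ∀ v, ¬ arc v v)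
    (hasym : ∀ u v, arc u v → ¬ arc v u)
    (htri : ¬ ∃ a b c, arc a b ∧ arc b c ∧ arc c a)
    (β : ℕ) :
    ∀ P : Finset V,
      (∀ s : Finset V, s ⊆ P →
        (∀ u ∈ s, ∀ v ∈ s, u ≠ v → part u ≠ part v) →
        (∀ u ∈ s, ∀ v ∈ s, u ≠ v → ¬ arc u v) → s.card ≤ β) →
      ∃ S : Finset ι, S.card ≤ hFun β ∧
        ∀ v ∈ P, part v ∉ S → ∃ w, w ∈ P ∧ part w ∈ S ∧ arc w v := by
  classical
  induction β with
  | zero =>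
    intro P hbound
    refine ⟨∅, by simp [hFun], ?_⟩
    intro v hv _
    exfalso
    have h1 : ({v} : Finset V).card ≤ 0 := by
      apply hbound
      · simpa using hv
      · intro u hu w hw huw; simp at hu hw; subst hu; subst hw; exact absurd rfl huw
      · intro u hu w hw huw; simp at hu hw; subst hu; subst hw; exact absurd rfl huw
    simp at h1
  | succ n IH =>
    intro P hbound
    set 𝕀 : Finset (Finset V) := P.powerset.filter (fun s =>
      s.card = n + 1 ∧ (∀ u ∈ s, ∀ v ∈ s, u ≠ v → part u ≠ part v) ∧
      (∀ u ∈ s, ∀ v ∈ s, u ≠ v → ¬ arc u v)) with h𝕀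
    have hmem𝕀 : ∀ s : Finset V, s ∈ 𝕀 ↔ s ⊆ P ∧ s.card = n + 1 ∧
        (∀ u ∈ s, ∀ v ∈ s, u ≠ v → part u ≠ part v) ∧
        (∀ u ∈ s, ∀ v ∈ s, u ≠ v → ¬ arc u v) := by
      intro s
      simp [h𝕀, Finset.mem_filter, Finset.mem_powerset, and_assoc]
    have extract : ∀ s : Finset V, s ⊆ P →
        (∀ u ∈ s, ∀ v ∈ s, u ≠ v → part u ≠ part v) →
        (∀ u ∈ s, ∀ v ∈ s, u ≠ v → ¬ arc u v) →
        n < s.card → ∃ t, t ⊆ s ∧ t ∈ 𝕀 := by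
      intro s hsP h1 h2 hlt
      obtain ⟨t, hts, htc⟩ := Finset.exists_subset_card_eq (s := s) (n := n + 1) hlt
      exact ⟨t, hts, (hmem𝕀 t).2 ⟨hts.trans hsP, htc,
        fun u hu v hv => h1 u (hts hu) v (hts hv),
        fun u hu v hv => h2 u (hts hu) v (hts hv)⟩⟩
    by_cases hne : 𝕀.Nonempty
    · -- main case: there is an independent transversal of size n+1
      set W : Finset V → Finset V := fun I =>
        P.filter (fun w => (∀ v ∈ I, arc w v) ∧
          ∀ z ∈ P, part z ∈ I.image part → ¬ arc z w) with hWdef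
      have hWmem : ∀ I w, w ∈ W I ↔ w ∈ P ∧ (∀ v ∈ I, arc w v) ∧
          ∀ z ∈ P, part z ∈ I.image part → ¬ arc z w := by
        intro I w; simp [hWdef, Finset.mem_filter]
      set R : Finset V → Finset V → Prop := fun J I => J ∈ 𝕀 ∧ I ∈ 𝕀 ∧ J ⊆ W I with hRdef
      have memTG : ∀ p q, Relation.TransGen R p q → p ∈ 𝕀 ∧ q ∈ 𝕀 := by
        intro p q h
        induction h with
        | single h => exact ⟨h.1, h.2.1⟩
        | tail _ h ih => exact ⟨ih.1, h.2.1⟩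
      -- the key invariant: along a chain, the bottom set beats nothing in the top set
      have inv : ∀ a c, Relation.TransGen R a c → ∀ x ∈ c, ∀ y ∈ a, ¬ arc x y := by
        intro a c h
        induction h using Relation.TransGen.head_induction_on with
        | single hrel =>
          intro x hx y hy hxy
          have h1 := hrel.2.2 hy
          have h2 := ((hWmem _ y).1 h1).2.1 x hx
          exact hasym y x h2 hxy
        | head hrel htg ihP =>
          rename_i a' b'
          intro x hx y hy hxy
          have hc𝕀 : c ∈ 𝕀 := (memTG _ _ htg).2
          have hcP : c ⊆ P := ((hmem𝕀 c).1 hc𝕀).1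
          have hxP : x ∈ P := hcP hx
          have hyW : y ∈ W b' := hrel.2.2 hy
          obtain ⟨hyP, hyB, hyU⟩ := (hWmem _ y).1 hyW
          by_cases hpx : part x ∈ b'.image part
          · exact hyU x hxP hpx hxy
          · have hb𝕀 : b' ∈ 𝕀 := hrel.2.1
            obtain ⟨hbP, hbc, hbpd, hbind⟩ := (hmem𝕀 b').1 hb𝕀
            have hxb : x ∉ b' := fun hxb => hpx (Finset.mem_image_of_mem part hxb)
            have hnon : ∀ u ∈ b', ¬ arc x u ∧ ¬ arc u x := by
              intro u hu
              refine ⟨ihP x hx u hu, ?_⟩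
              intro hux
              exact htri ⟨x, y, u, hxy, hyB u hu, hux⟩
            have hsub : insert x b' ⊆ P := by
              intro w hw
              rcases Finset.mem_insert.1 hw with rfl | hw
              · exact hxP
              · exact hbP hw
            have hpd : ∀ u ∈ insert x b', ∀ v ∈ insert x b', u ≠ v → part u ≠ part v := by
              intro u hu v hv huv
              rcases Finset.mem_insert.1 hu with hu1 | hu1 <;>
                rcases Finset.mem_insert.1 hv with hv1 | hv1
              · exact absurd (hu1.trans hv1.symm) huv
              · rw [hu1]
                exact fun h => hpx (by rw [h]; exact Finset.mem_image_of_mem part hv1)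
              · rw [hv1]
                exact fun h => hpx (by rw [← h]; exact Finset.mem_image_of_mem part hu1)
              · exact hbpd u hu1 v hv1 huv
            have hindep : ∀ u ∈ insert x b', ∀ v ∈ insert x b', u ≠ v → ¬ arc u v := by
              intro u hu v hv huv
              rcases Finset.mem_insert.1 hu with hu1 | hu1 <;>
                rcases Finset.mem_insert.1 hv with hv1 | hv1
              · exact absurd (hu1.trans hv1.symm) huv
              · rw [hu1]; exact (hnon v hv1).1
              · rw [hv1]; exact (hnon u hu1).2
              · exact hbind u hu1 v hv1 huv
            have hle := hbound (insert x b') hsub hpd hindep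
            rw [Finset.card_insert_of_notMem hxb, hbc] at hle
            omega
      have irr : ∀ I, ¬ Relation.TransGen R I I := by
        intro I h
        have hI𝕀 : I ∈ 𝕀 := (memTG _ _ h).1
        obtain ⟨hIP, hIc, _, _⟩ := (hmem𝕀 I).1 hI𝕀
        have hIne : I.Nonempty := Finset.card_pos.1 (by omega)
        obtain ⟨x0, hx0⟩ := hIne
        obtain ⟨d, h1, h2⟩ := (Relation.TransGen.head'_iff).1 h
        rcases Relation.reflTransGen_iff_eq_or_transGen.1 h2 with heq | htg
        · subst heq
          exact hirr x0 (((hWmem I x0).1 (h1.2.2 hx0)).2.1 x0 hx0)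
        · have hd𝕀 : d ∈ 𝕀 := h1.2.1
          obtain ⟨hdP, hdc, _, _⟩ := (hmem𝕀 d).1 hd𝕀
          obtain ⟨y0, hy0⟩ : d.Nonempty := Finset.card_pos.1 (by omega)
          have harc : arc x0 y0 := ((hWmem d x0).1 (h1.2.2 hx0)).2.1 y0 hy0
          exact inv d I htg x0 hx0 y0 hy0 harc
      -- choose a minimal element
      obtain ⟨Istar, hIstar, hminphi⟩ := Finset.exists_min_image 𝕀
        (fun I => (𝕀.filter (fun J => Relation.TransGen R J I)).card) hne
      have hnoJ : ∀ J, ¬ R J Istar := by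
        intro J hRJ
        have hJ𝕀 : J ∈ 𝕀 := hRJ.1
        have hss : 𝕀.filter (fun K => Relation.TransGen R K J) ⊂
            𝕀.filter (fun K => Relation.TransGen R K Istar) := by
          constructor
          · intro K hK
            simp only [Finset.mem_filter] at hK ⊢
            exact ⟨hK.1, hK.2.tail hRJ⟩
          · intro hsub
            have hJmem : J ∈ 𝕀.filter (fun K => Relation.TransGen R K Istar) := by
              simp only [Finset.mem_filter]
              exact ⟨hJ𝕀, Relation.TransGen.single hRJ⟩
            have h2 := hsub hJmem
            simp only [Finset.mem_filter] at h2
            exact irr J h2.2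
        have hlt := Finset.card_lt_card hss
        have h3 := hminphi J hJ𝕀
        omega
      obtain ⟨hsP, hsc, hspd, hsind⟩ := (hmem𝕀 Istar).1 hIstar
      -- the Z piece
      have hZb : ∀ s : Finset V, s ⊆ W Istar →
          (∀ u ∈ s, ∀ v ∈ s, u ≠ v → part u ≠ part v) →
          (∀ u ∈ s, ∀ v ∈ s, u ≠ v → ¬ arc u v) → s.card ≤ n := by
        intro s h1 h2 h3
        by_contra hlt
        push_neg at hlt
        have hsP' : s ⊆ P := h1.trans (Finset.filter_subset _ _)
        obtain ⟨t, hts, ht𝕀⟩ := extract s hsP' h2 h3 hlt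
        exact hnoJ t ⟨ht𝕀, hIstar, hts.trans h1⟩
      obtain ⟨SZ, hSZ1, hSZ2⟩ := IH (W Istar) hZb
      -- the X pieces
      have hXex : ∀ u : V, ∃ S : Finset ι, S.card ≤ hFun n ∧ (u ∈ Istar →
          ∀ v ∈ P.filter (fun x => part x ≠ part u ∧ ¬ arc x u ∧ ¬ arc u x),
            part v ∉ S → ∃ w, w ∈ P.filter (fun x => part x ≠ part u ∧ ¬ arc x u ∧ ¬ arc u x) ∧
              part w ∈ S ∧ arc w v) := by
        intro u
        by_cases hu : u ∈ Istar
        · have hXb : ∀ s : Finset V,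
              s ⊆ P.filter (fun x => part x ≠ part u ∧ ¬ arc x u ∧ ¬ arc u x) →
              (∀ x ∈ s, ∀ v ∈ s, x ≠ v → part x ≠ part v) →
              (∀ x ∈ s, ∀ v ∈ s, x ≠ v → ¬ arc x v) → s.card ≤ n := by
            intro s h1 h2 h3
            by_contra hlt
            push_neg at hlt
            have hsP' : s ⊆ P := h1.trans (Finset.filter_subset _ _)
            obtain ⟨t, hts, ht𝕀⟩ := extract s hsP' h2 h3 hlt
            obtain ⟨htP, htc, htpd, htind⟩ := (hmem𝕀 t).1 ht𝕀
            have hprop : ∀ x ∈ t, part x ≠ part u ∧ ¬ arc x u ∧ ¬ arc u x := by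
              intro x hx
              have hxm := h1 (hts hx)
              exact (Finset.mem_filter.1 hxm).2
            have hut : u ∉ t := fun h => (hprop u h).1 rfl
            have hsub : insert u t ⊆ P := by
              intro w hw
              rcases Finset.mem_insert.1 hw with rfl | hw
              · exact hsP hu
              · exact htP hw
            have hpd : ∀ x ∈ insert u t, ∀ v ∈ insert u t, x ≠ v → part x ≠ part v := by
              intro x hx v hv hxv
              rcases Finset.mem_insert.1 hx with hx1 | hx1 <;>
                rcases Finset.mem_insert.1 hv with hv1 | hv1
              · exact absurd (hx1.trans hv1.symm) hxv
              · rw [hx1]; exact fun h => (hprop v hv1).1 h.symm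
              · rw [hv1]; exact (hprop x hx1).1
              · exact htpd x hx1 v hv1 hxv
            have hindep : ∀ x ∈ insert u t, ∀ v ∈ insert u t, x ≠ v → ¬ arc x v := by
              intro x hx v hv hxv
              rcases Finset.mem_insert.1 hx with hx1 | hx1 <;>
                rcases Finset.mem_insert.1 hv with hv1 | hv1
              · exact absurd (hx1.trans hv1.symm) hxv
              · rw [hx1]; exact (hprop v hv1).2.2
              · rw [hv1]; exact (hprop x hx1).2.1
              · exact htind x hx1 v hv1 hxv
            have hle := hbound (insert u t) hsub hpd hindep
            rw [Finset.card_insert_of_notMem hut, htc] at hle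
            omega
          obtain ⟨S, hS1, hS2⟩ := IH _ hXb
          exact ⟨S, hS1, fun _ => hS2⟩
        · exact ⟨∅, by simp, fun h => absurd h hu⟩
      choose SX hSX1 hSX2 using hXex
      refine ⟨Istar.image part ∪ Istar.biUnion SX ∪ SZ, ?_, ?_⟩
      · have h1 : (Istar.image part).card ≤ n + 1 := by
          calc (Istar.image part).card ≤ Istar.card := Finset.card_image_le
            _ = n + 1 := hsc
        have h2 : (Istar.biUnion SX).card ≤ (n + 1) * hFun n := by
          calc (Istar.biUnion SX).card ≤ ∑ u ∈ Istar, (SX u).card := Finset.card_biUnion_le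
            _ ≤ ∑ _u ∈ Istar, hFun n := Finset.sum_le_sum (fun u _ => hSX1 u)
            _ = (n + 1) * hFun n := by rw [Finset.sum_const, hsc, smul_eq_mul]
        calc (Istar.image part ∪ Istar.biUnion SX ∪ SZ).card
            ≤ (Istar.image part ∪ Istar.biUnion SX).card + SZ.card :=
              Finset.card_union_le _ _
          _ ≤ ((Istar.image part).card + (Istar.biUnion SX).card) + SZ.card :=
              Nat.add_le_add_right (Finset.card_union_le _ _) _
          _ ≤ (n + 1) + ((n + 1) * hFun n + hFun n) := by
              have := hSZ1
              omega
          _ ≤ hFun (n + 1) := bound_step n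
      · intro v hvP hvS
        have hvS1 : part v ∉ Istar.image part := fun h =>
          hvS (Finset.mem_union_left _ (Finset.mem_union_left _ h))
        have hvS2 : ∀ u ∈ Istar, part v ∉ SX u := fun u hu h =>
          hvS (Finset.mem_union_left _ (Finset.mem_union_right _
            (Finset.mem_biUnion.2 ⟨u, hu, h⟩)))
        have hvS3 : part v ∉ SZ := fun h => hvS (Finset.mem_union_right _ h)
        by_cases hc : ∃ z ∈ P, part z ∈ Istar.image part ∧ arc z v
        · obtain ⟨z, hzP, hzi, hzv⟩ := hc
          exact ⟨z, hzP, Finset.mem_union_left _ (Finset.mem_union_left _ hzi), hzv⟩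
        · push_neg at hc
          by_cases hall : ∀ u ∈ Istar, arc v u
          · have hvZ : v ∈ W Istar := (hWmem Istar v).2
              ⟨hvP, hall, fun z hz hzi => hc z hz hzi⟩
            obtain ⟨w, hw1, hw2, hw3⟩ := hSZ2 v hvZ hvS3
            exact ⟨w, (Finset.filter_subset _ _) hw1,
              Finset.mem_union_right _ hw2, hw3⟩
          · push_neg at hall
            obtain ⟨u, hu, hvu⟩ := hall
            have huP : u ∈ P := hsP hu
            have hui : part u ∈ Istar.image part := Finset.mem_image_of_mem part hu
            have huv : ¬ arc u v := hc u huP hui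
            have hpv : part v ≠ part u := fun h => hvS1 (h ▸ hui)
            have hvX : v ∈ P.filter (fun x => part x ≠ part u ∧ ¬ arc x u ∧ ¬ arc u x) :=
              Finset.mem_filter.2 ⟨hvP, hpv, hvu, huv⟩
            obtain ⟨w, hw1, hw2, hw3⟩ := hSX2 u hu v hvX (hvS2 u hu)
            exact ⟨w, (Finset.filter_subset _ _) hw1,
              Finset.mem_union_left _ (Finset.mem_union_right _
                (Finset.mem_biUnion.2 ⟨u, hu, hw2⟩)), hw3⟩
    ·
      have hb : ∀ s : Finset V, s ⊆ P →
          (∀ u ∈ s, ∀ v ∈ s, u ≠ v → part u ≠ part v) →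
          (∀ u ∈ s, ∀ v ∈ s, u ≠ v → ¬ arc u v) → s.card ≤ n := by
        intro s h1 h2 h3
        by_contra hlt
        push_neg at hlt
        obtain ⟨t, _, ht⟩ := extract s h1 h2 h3 hlt
        exact hne ⟨t, ht⟩
      obtain ⟨S, hS1, hS2⟩ := IH P hb
      exact ⟨S, hS1.trans (hFun_le_succ n), hS2⟩

/-- If `D` is a finite multipartite digraph with no cyclic triangle
and transversal independence number `β ≥ 1`, then `k(D) ≤ hFun β`. -/
theorem multipartite_domination_le_hFun
    (V ι : Type) [Fintype V] [Fintype ι]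
    (arc : V → V → Prop) (part : V → ι)
    (hirr : ∀ v, ¬ arc v v)
    (hasym : ∀ u v, arc u v → ¬ arc v u)
    (hpart : ∀ u v, arc u v → part u ≠ part v)
    (htri : ¬ ∃ a b c, arc a b ∧ arc b c ∧ arc c a)
    (β : ℕ) (hβ : 1 ≤ β)
    (hbeta : IsGreatest {n : ℕ | ∃ s : Finset V, s.card = n ∧
        (∀ u ∈ s, ∀ v ∈ s, u ≠ v → part u ≠ part v) ∧
        (∀ u ∈ s, ∀ v ∈ s, u ≠ v → ¬ arc u v)} β) :
    ∃ S : Finset ι, S.card ≤ hFun β ∧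
      ∀ v : V, part v ∉ S → ∃ w : V, part w ∈ S ∧ arc w v := by
  have hb : ∀ s : Finset V, s ⊆ Finset.univ →
      (∀ u ∈ s, ∀ v ∈ s, u ≠ v → part u ≠ part v) →
      (∀ u ∈ s, ∀ v ∈ s, u ≠ v → ¬ arc u v) → s.card ≤ β := by
    intro s _ h1 h2
    exact hbeta.2 ⟨s, rfl, h1, h2⟩
  obtain ⟨S, hS1, hS2⟩ := aux_domination arc part hirr hasym htri β Finset.univ hb
  refine ⟨S, hS1, ?_⟩
  intro v hv
  obtain ⟨w, _, hw2, hw3⟩ := hS2 v (Finset.mem_univ v) hv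
  exact ⟨w, hw2, hw3⟩
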